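/- Let (θ_n)_{n≥1} ⊂ (0,1) with θ_n → 0 and sup_n θ_n < 1, and define θ̄_n := sup{ θ_{k_1}·θ_{k_2}·⋯·θ_{k_ℓ} : ℓ ≥ 1, k_1, …, k_ℓ ≥ 1, k_1 + ⋯ + k_ℓ ≥ n }. Then (θ̄_n) is a regular sequence (i.e. (θ̄_n) ⊂ (0,1), θ̄_n is decreasing with θ̄_n → 0, and θ̄_{n+m} ≥ θ̄_n·θ̄_m for all n,m ≥ 1), and if ‖·‖ and ‖·‖′ are norms on c₀₀ satisfying the implicit mixed Tsirelson equation with parameters (θ_n) and (θ̄_n) respectively, then ‖x‖ = ‖x‖′ for all x ∈ c₀₀ (i.e. T(θ_n,S_n)_{n∈ℕ} is naturally isometric to T(θ̄_n,S_n)_{n∈ℕ}). -/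

import Mathlib

open Filter

noncomputable section

/-- `c₀₀`: the finitely supported real sequences. -/
abbrev C00 : Type := ℕ →₀ ℝ

/-- The unit vector basis of `c₀₀`. -/
def eBasis (i : ℕ) : C00 := Finsupp.single i 1

/-- `f` is a norm on `c₀₀`. -/
def IsNorm (f : C00 → ℝ) : Prop :=
  (∀ v w : C00, f (v + w) ≤ f v + f w) ∧
  (∀ (c : ℝ) (v : C00), f (c • v) = |c| * f v) ∧
  (∀ v : C00, v ≠ 0 → 0 < f v)

/-- `E < F` for finite sets of naturals: every element of `E` is smaller than
every element of `F` (vacuously true if one of them is empty). -/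
def FinLt (E F : Finset ℕ) : Prop := ∀ a ∈ E, ∀ b ∈ F, a < b

/-- `min ran(v)` = the minimum of the support of `v`. -/
def minSupp (v : C00) : ℕ := sInf {j | v j ≠ 0}

/-- `max ran(v)` = the maximum of the support of `v`. -/
def maxSupp (v : C00) : ℕ := sSup {j | v j ≠ 0}

/-- `ran(v)`: the smallest integer interval containing the support of `v`. -/
def ranSet (v : C00) : Set ℕ := Set.Icc (minSupp v) (maxSupp v)

/-- `E` is an interval of naturals. -/
def IsInterval (E : Finset ℕ) : Prop :=
  ∀ a ∈ E, ∀ b ∈ E, ∀ c : ℕ, a ≤ c → c ≤ b → c ∈ E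

/-- The Schreier families `S_n`, `n ∈ ℕ`. -/
def SchreierFam : ℕ → Set (Finset ℕ)
  | 0 => {F : Finset ℕ | F.card ≤ 1}
  | (n + 1) => {F : Finset ℕ | ∃ (k : ℕ) (Fs : Fin k → Finset ℕ),
      (∀ i, Fs i ∈ SchreierFam n) ∧
      (∀ i j : Fin k, i < j → FinLt (Fs i) (Fs j)) ∧
      (∀ i, ∀ a ∈ Fs i, k ≤ a) ∧
      F = Finset.univ.biUnion Fs}

/-- `S_ω = {F : n ≤ F and F ∈ S_n for some n}`. -/
def SchreierOmega : Set (Finset ℕ) :=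
  {F : Finset ℕ | ∃ n : ℕ, (∀ a ∈ F, n ≤ a) ∧ F ∈ SchreierFam n}

/-- The restriction `Ex` of `x` to a finite set `E`. -/
def restr (E : Finset ℕ) (v : C00) : C00 := v.filter (fun j => j ∈ E)

/-- `(E_i)` is an admissible family of (nonempty, finite) sets for the family `S`:
`E_1 < E_2 < ⋯` and `{min E_i} ∈ S`. -/
def AdmissibleSets (S : Set (Finset ℕ)) {m : ℕ} (E : Fin m → Finset ℕ) : Prop :=
  (∀ i, (E i).Nonempty) ∧
  (∀ i j : Fin m, i < j → FinLt (E i) (E j)) ∧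
  (Finset.univ.image fun i => sInf ((E i : Set ℕ))) ∈ S

/-- `(E_i)` is an admissible family of (nonempty) intervals for the family `S`. -/
def AdmissibleIntervals (S : Set (Finset ℕ)) {m : ℕ} (E : Fin m → Finset ℕ) : Prop :=
  (∀ i, (E i).Nonempty ∧ IsInterval (E i)) ∧
  (∀ i j : Fin m, i < j → FinLt (E i) (E j)) ∧
  (Finset.univ.image fun i => sInf ((E i : Set ℕ))) ∈ S

/-- `nrm` satisfies the implicit mixed Tsirelson norm equation with parameters `θ_q`
and families `Sq q` (`q ≥ 1`):
`‖x‖ = max(‖x‖_∞, sup{θ_q Σ ‖E_i x‖ : q ≥ 1, (E_i) q-admissible})`. -/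
def MixedTsirelsonNormGen (θ : ℕ → ℝ) (Sq : ℕ → Set (Finset ℕ)) (nrm : C00 → ℝ) : Prop :=
  ∀ x : C00, nrm x =
    max (sSup {r : ℝ | ∃ j : ℕ, r = |x j|})
      (sSup {r : ℝ | ∃ (q m : ℕ) (E : Fin m → Finset ℕ), 1 ≤ q ∧
        AdmissibleSets (Sq q) E ∧ r = θ q * ∑ i, nrm (restr (E i) x)})

/-- `nrm` is the norm of the mixed Tsirelson space `T(θ_n, S_n)_{n ∈ ℕ}`. -/
def MixedTsirelsonNorm (θ : ℕ → ℝ) (nrm : C00 → ℝ) : Prop :=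
  MixedTsirelsonNormGen θ SchreierFam nrm

/-- `(θ_n)_{n ≥ 1}` is a regular sequence. -/
def RegularSeq (θ : ℕ → ℝ) : Prop :=
  (∀ n : ℕ, 1 ≤ n → 0 < θ n ∧ θ n < 1) ∧
  (∀ n : ℕ, 1 ≤ n → θ (n + 1) ≤ θ n) ∧
  Tendsto θ atTop (nhds 0) ∧
  (∀ n m : ℕ, 1 ≤ n → 1 ≤ m → θ n * θ m ≤ θ (n + m))

/-- The `i`-th block `Σ_{j = m_i}^{m_{i+1} - 1} a_j x_j` of a block sequence of `(x_j)`
with coefficients `a` and breakpoints `m`. -/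
def blk (x : ℕ → C00) (a : ℕ → ℝ) (m : ℕ → ℕ) (i : ℕ) : C00 :=
  ∑ j ∈ Finset.Ico (m i) (m (i + 1)), a j • x j

/-- The minimum of the range w.r.t. `(x_j)` of the `i`-th block: the least `j` in
`[m_i, m_{i+1})` with `a_j ≠ 0`. -/
def minRangeIdx (a : ℕ → ℝ) (m : ℕ → ℕ) (i : ℕ) : ℕ :=
  sInf {j : ℕ | j ∈ Finset.Ico (m i) (m (i + 1)) ∧ a j ≠ 0}

/-- `(x_i)` is an (infinite) block sequence of `(e_i)`: nonzero and `x_1 < x_2 < ⋯`. -/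
def IsBlockSeq (x : ℕ → C00) : Prop :=
  (∀ i, x i ≠ 0) ∧ ∀ i, FinLt (x i).support (x (i + 1)).support

/-- `(z_i)` is an (infinite) block sequence of `(x_i)`. -/
def IsBlockOf (x z : ℕ → C00) : Prop :=
  ∃ (a : ℕ → ℝ) (m : ℕ → ℕ), StrictMono m ∧ (∀ i, z i = blk x a m i) ∧ ∀ i, z i ≠ 0

/-- The set of `δ ≥ 0` witnessing the `ℓ_1`-estimate for all finite block sequences of
`(x_i)` that are admissible (for the family `S`) *with respect to `(x_i)`*. -/
def deltaSetX (S : Set (Finset ℕ)) (nrm : C00 → ℝ) (x : ℕ → C00) : Set ℝ :=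
  {δ : ℝ | 0 ≤ δ ∧ ∀ (n : ℕ) (a : ℕ → ℝ) (m : ℕ → ℕ), StrictMono m →
    (∀ i < n, blk x a m i ≠ 0) →
    (Finset.range n).image (fun i => minRangeIdx a m i) ∈ S →
    δ * ∑ i ∈ Finset.range n, nrm (blk x a m i) ≤
      nrm (∑ i ∈ Finset.range n, blk x a m i)}

/-- The set of `δ ≥ 0` witnessing the `ℓ_1`-estimate for all finite block sequences of
`(x_i)` that are admissible (for the family `S`) *with respect to `(e_i)`*. -/
def deltaSetE (S : Set (Finset ℕ)) (nrm : C00 → ℝ) (x : ℕ → C00) : Set ℝ :=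
  {δ : ℝ | 0 ≤ δ ∧ ∀ (n : ℕ) (a : ℕ → ℝ) (m : ℕ → ℕ), StrictMono m →
    (∀ i < n, blk x a m i ≠ 0) →
    (Finset.range n).image (fun i => minSupp (blk x a m i)) ∈ S →
    δ * ∑ i ∈ Finset.range n, nrm (blk x a m i) ≤
      nrm (∑ i ∈ Finset.range n, blk x a m i)}

/-- `δ_α(x_i)` (α-admissibility w.r.t. `(x_i)`), for the α-th family `S`. -/
def deltaX (S : Set (Finset ℕ)) (nrm : C00 → ℝ) (x : ℕ → C00) : ℝ :=
  sSup (deltaSetX S nrm x)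

/-- `δ_α((x_i),(e_i))` (α-admissibility w.r.t. `(e_i)`), for the α-th family `S`. -/
def deltaE (S : Set (Finset ℕ)) (nrm : C00 → ℝ) (x : ℕ → C00) : ℝ :=
  sSup (deltaSetE S nrm x)

/-- `nrm'` is an equivalent norm to `nrm`. -/
def EquivNormOn (nrm nrm' : C00 → ℝ) : Prop :=
  ∃ c C : ℝ, 0 < c ∧ (∀ x, c * nrm x ≤ nrm' x) ∧ ∀ x, nrm' x ≤ C * nrm x

/-- The set whose supremum is `δ̈`(S)`(y_i)`: all values `δ_S((z_i), |·|)` where `|·|`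
is an equivalent norm on `X` and `(z_i)` is a block sequence of `(y_i)`. -/
def dessSet (S : Set (Finset ℕ)) (nrm : C00 → ℝ) (y : ℕ → C00) : Set ℝ :=
  {d : ℝ | ∃ (nrm' : C00 → ℝ) (z : ℕ → C00), IsNorm nrm' ∧ EquivNormOn nrm nrm' ∧
    IsBlockOf y z ∧ d = deltaX S nrm' z}

/-- A Schreier hierarchy `(S_α)_{α < ω₁}`. -/
structure IsSchreierHierarchy (S : Ordinal → Set (Finset ℕ)) : Prop where
  zero : S 0 = {F : Finset ℕ | F.card ≤ 1}
  succ : ∀ α : Ordinal, α < Ordinal.omega 1 →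
    S (α + 1) = {F : Finset ℕ | ∃ (k : ℕ) (Fs : Fin k → Finset ℕ),
      (∀ i, Fs i ∈ S α) ∧
      (∀ i j : Fin k, i < j → FinLt (Fs i) (Fs j)) ∧
      (∀ i, ∀ a ∈ Fs i, k ≤ a) ∧
      F = Finset.univ.biUnion Fs}
  limit : ∀ α : Ordinal, α < Ordinal.omega 1 → Order.IsSuccLimit α →
    ∃ f : ℕ → Ordinal, StrictMono f ∧ (⨆ n, f n) = α ∧
      S α = {F : Finset ℕ | ∃ n : ℕ, (∀ a ∈ F, n ≤ a) ∧ F ∈ S (f n)}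

/-- `(y_i)` Δ-stabilizes `γ = (γ_α)_{α<ω₁}`. -/
def DeltaStabilizes (S : Ordinal → Set (Finset ℕ)) (nrm : C00 → ℝ)
    (y : ℕ → C00) (γ : Ordinal → ℝ) : Prop :=
  ∃ ε : ℕ → ℝ, Antitone ε ∧ Tendsto ε atTop (nhds 0) ∧
    ∀ α : Ordinal, α < Ordinal.omega 1 → ∃ m : ℕ, ∀ n : ℕ, m ≤ n →
      ∀ z : ℕ → C00, IsBlockOf (fun i => y (i + n)) z →
        |deltaX (S α) nrm z - γ α| < ε n

/-- `(y_i)` Δ_{(e_i)}-stabilizes `γ = (γ_α)_{α<ω₁}`. -/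
def DeltaStabilizesE (S : Ordinal → Set (Finset ℕ)) (nrm : C00 → ℝ)
    (y : ℕ → C00) (γ : Ordinal → ℝ) : Prop :=
  ∃ ε : ℕ → ℝ, Antitone ε ∧ Tendsto ε atTop (nhds 0) ∧
    ∀ α : Ordinal, α < Ordinal.omega 1 → ∃ m : ℕ, ∀ n : ℕ, m ≤ n →
      ∀ z : ℕ → C00, IsBlockOf (fun i => y (i + n)) z →
        |deltaE (S α) nrm z - γ α| < ε n

/-- `(e_i)` is a basic sequence for the norm `nrm`. -/
def IsBasicE (nrm : C00 → ℝ) : Prop :=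
  ∃ K : ℝ, ∀ (a : ℕ → ℝ) (m n : ℕ), m ≤ n →
    nrm (∑ i ∈ Finset.range m, a i • eBasis i) ≤
      K * nrm (∑ i ∈ Finset.range n, a i • eBasis i)

/-- The auxiliary norm `‖x‖_p` (`‖·‖_0 = ‖·‖`). -/
def pnorm (θ : ℕ → ℝ) (nrm : C00 → ℝ) (p : ℕ) (x : C00) : ℝ :=
  if p = 0 then nrm x
  else θ p * sSup {r : ℝ | ∃ (m : ℕ) (E : Fin m → Finset ℕ),
    AdmissibleIntervals (SchreierFam p) E ∧ r = ∑ i, nrm (restr (E i) x)}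

/-- The auxiliary seminorm `‖x‖_{N,p}`. -/
def nNorm (θ : ℕ → ℝ) (nrm : C00 → ℝ) (N p : ℕ) (x : C00) : ℝ :=
  sSup {r : ℝ | ∃ E : Fin N → Finset ℕ, (∀ i, IsInterval (E i)) ∧
    (∀ i j : Fin N, i < j → FinLt (E i) (E j)) ∧ (∀ i, ∀ a ∈ E i, N ≤ a) ∧
    r = ∑ i, pnorm θ nrm p (restr (E i) x)}

/-- The auxiliary norm `‖x‖_{S_q,p}`. -/
def sNNorm (θ : ℕ → ℝ) (nrm : C00 → ℝ) (q p : ℕ) (x : C00) : ℝ :=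
  sSup {r : ℝ | ∃ (m : ℕ) (E : Fin m → Finset ℕ),
    AdmissibleIntervals (SchreierFam q) E ∧ r = ∑ i, pnorm θ nrm p (restr (E i) x)}

-- helper lemmas part 1
section Helpers
open Finset

lemma IsNorm.zero' {f : C00 → ℝ} (hf : IsNorm f) : f 0 = 0 := by
  have := hf.2.1 0 0
  simpa using this

lemma IsNorm.nonneg' {f : C00 → ℝ} (hf : IsNorm f) (x : C00) : 0 ≤ f x := by
  by_cases hx : x = 0
  · simp [hx, hf.zero']
  · exact le_of_lt (hf.2.2 x hx)

lemma restr_apply (E : Finset ℕ) (x : C00) (j : ℕ) :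
    restr E x j = if j ∈ E then x j else 0 := by
  simp [restr, Finsupp.filter_apply]

lemma restr_eq_self {E : Finset ℕ} {x : C00} (h : x.support ⊆ E) : restr E x = x := by
  ext j
  rw [restr_apply]
  by_cases hj : j ∈ E
  · simp [hj]
  · simp only [hj, if_false]
    by_contra h0
    exact hj (h (Finsupp.mem_support_iff.mpr fun hh => h0 hh.symm))

lemma restr_eq_zero {E : Finset ℕ} {x : C00} (h : ∀ a ∈ E, a ∉ x.support) :
    restr E x = 0 := by
  ext j
  rw [restr_apply]
  by_cases hj : j ∈ E
  · simp only [hj, if_true, Finsupp.coe_zero, Pi.zero_apply]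
    by_contra h0
    exact h j hj (Finsupp.mem_support_iff.mpr h0)
  · simp [hj]

lemma restr_restr (E F : Finset ℕ) (x : C00) :
    restr E (restr F x) = restr (E ∩ F) x := by
  ext j
  simp only [restr_apply, Finset.mem_inter]
  split_ifs with h1 h2 h3 h3 <;> tauto

lemma restr_inter_support (E : Finset ℕ) (x : C00) :
    restr (E ∩ x.support) x = restr E x := by
  ext j
  simp only [restr_apply, Finset.mem_inter, Finsupp.mem_support_iff]
  split_ifs with h1 h2 <;> tauto

lemma support_restr (E : Finset ℕ) (x : C00) :
    (restr E x).support = x.support.filter (· ∈ E) := by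
  ext j
  simp only [Finsupp.mem_support_iff, restr_apply, Finset.mem_filter,
    Finsupp.mem_support_iff]
  split_ifs with h <;> tauto

lemma restr_ne_zero_iff (E : Finset ℕ) (x : C00) :
    restr E x ≠ 0 ↔ (x.support.filter (· ∈ E)).Nonempty := by
  rw [← Finsupp.support_nonempty_iff, support_restr]

lemma FinLt.disjoint {E F : Finset ℕ} (h : FinLt E F) : Disjoint E F := by
  rw [Finset.disjoint_left]
  intro a ha ha'
  exact lt_irrefl a (h a ha a ha')

lemma finlt_disjoint_of_ne {M : ℕ} {E : Fin M → Finset ℕ}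
    (hord : ∀ i j : Fin M, i < j → FinLt (E i) (E j)) {i j : Fin M} (h : i ≠ j) :
    Disjoint (E i) (E j) := by
  rcases lt_or_gt_of_ne h with h' | h'
  · exact (hord i j h').disjoint
  · exact ((hord j i h').disjoint).symm

end Helpers
section Schreier
open Finset

lemma empty_mem_schreier (n : ℕ) : (∅ : Finset ℕ) ∈ SchreierFam n := by
  cases n with
  | zero => simp [SchreierFam]
  | succ n =>
      refine ⟨0, fun i => ∅, ?_, ?_, ?_, ?_⟩
      · exact fun i => i.elim0
      · exact fun i => i.elim0
      · exact fun i => i.elim0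
      · simp

lemma schreier_one_le {q : ℕ} {F : Finset ℕ} (h : F ∈ SchreierFam (q + 1)) :
    ∀ a ∈ F, 1 ≤ a := by
  obtain ⟨k, Fs, hmem, hlt, hk, rfl⟩ := h
  intro a ha
  rw [Finset.mem_biUnion] at ha
  obtain ⟨i, _, hai⟩ := ha
  have hk1 : 1 ≤ k := i.pos
  exact le_trans hk1 (hk i a hai)

lemma schreier_succ_subset {q : ℕ} (hq : 1 ≤ q) :
    SchreierFam q ⊆ SchreierFam (q + 1) := by
  intro F hF
  obtain ⟨q', rfl⟩ := Nat.exists_eq_add_of_le hq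
  refine ⟨1, fun _ => F, fun _ => hF, ?_, ?_, ?_⟩
  · intro i j hij; exact absurd (Subsingleton.elim i j) (ne_of_lt hij)
  · intro i a ha
    exact schreier_one_le (by simpa [Nat.add_comm] using hF) a ha
  · simp

lemma schreier_mono {q q' : ℕ} (hq : 1 ≤ q) (h : q ≤ q') :
    SchreierFam q ⊆ SchreierFam q' := by
  induction q' with
  | zero => omega
  | succ n ih =>
      rcases Nat.lt_or_ge q (n+1) with h' | h'
      · have hn : q ≤ n := by omega
        exact (ih hn).trans (schreier_succ_subset (le_trans hq hn))
      · have : q = n + 1 := by omega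
        subst this; exact fun _ h => h

end Schreier
section Dec
open Finset

lemma sInf_mem_finset {G : Finset ℕ} (hG : G.Nonempty) : sInf (G : Set ℕ) ∈ G := by
  have := Nat.sInf_mem ((Finset.coe_nonempty.mpr hG) : (G : Set ℕ).Nonempty)
  exact_mod_cast this

lemma schreier_dec (m : ℕ) : ∀ (n : ℕ) (F : Finset ℕ), F ∈ SchreierFam (n + m) →
    ∃ L : List (Finset ℕ),
      (∀ G ∈ L, G.Nonempty ∧ G ∈ SchreierFam m) ∧
      L.Pairwise FinLt ∧
      ((L.map fun G : Finset ℕ => sInf (G : Set ℕ)).toFinset ∈ SchreierFam n) ∧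
      ∀ a : ℕ, a ∈ F ↔ ∃ G ∈ L, a ∈ G := by
  intro n
  induction n with
  | zero =>
      intro F hF
      rcases F.eq_empty_or_nonempty with rfl | hFne
      · refine ⟨[], by simp, by simp, ?_, by simp⟩
        simpa [SchreierFam] using (by simp : (([] : List (Finset ℕ)).map
          fun G => sInf (G : Set ℕ)).toFinset.card ≤ 1)
      · refine ⟨[F], ?_, by simp, ?_, by simp⟩
        · intro G hG
          simp only [List.mem_singleton] at hG
          subst hG
          exact ⟨hFne, by simpa using hF⟩
        · simp [SchreierFam]
  | succ n ih =>
      intro F hF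
      rw [show n + 1 + m = (n + m) + 1 by omega] at hF
      obtain ⟨k, Fs, hmem, hlt, hk, rfl⟩ := hF
      choose Ls hA hB hC hD using fun i => ih (Fs i) (hmem i)
      have Gsub : ∀ i : Fin k, ∀ G ∈ Ls i, ∀ a ∈ G, a ∈ Fs i :=
        fun i G hG a ha => (hD i a).mpr ⟨G, hG, ha⟩
      refine ⟨(List.finRange k).flatMap Ls, ?_, ?_, ?_, ?_⟩
      · intro G hG
        rw [List.mem_flatMap] at hG
        obtain ⟨i, _, hGi⟩ := hG
        exact hA i G hGi
      · rw [List.flatMap_def, List.pairwise_flatten]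
        constructor
        · intro l' hl'
          rw [List.mem_map] at hl'
          obtain ⟨i, _, rfl⟩ := hl'
          exact hB i
        · refine List.Pairwise.map Ls ?_ (List.pairwise_lt_finRange k)
          intro i j hij G hG G' hG' a ha b hb
          exact hlt i j hij a (Gsub i G hG a ha) b (Gsub j G' hG' b hb)
      · have hMs : (((List.finRange k).flatMap Ls).map
            fun G : Finset ℕ => sInf (G : Set ℕ)).toFinset =
            Finset.univ.biUnion (fun i =>
              ((Ls i).map fun G : Finset ℕ => sInf (G : Set ℕ)).toFinset) := by
          ext r
          simp only [List.mem_toFinset, List.mem_map, List.mem_flatMap,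
            Finset.mem_biUnion, Finset.mem_univ, true_and]
          constructor
          · rintro ⟨G, ⟨i, -, hG⟩, rfl⟩
            exact ⟨i, G, hG, rfl⟩
          · rintro ⟨i, G, hG, rfl⟩
            exact ⟨G, ⟨i, List.mem_finRange i, hG⟩, rfl⟩
        rw [hMs]
        have hMsFs : ∀ i : Fin k, ∀ a ∈ ((Ls i).map fun G : Finset ℕ => sInf (G : Set ℕ)).toFinset,
            a ∈ Fs i := by
          intro i a ha
          rw [List.mem_toFinset, List.mem_map] at ha
          obtain ⟨G, hG, rfl⟩ := ha
          exact Gsub i G hG _ (sInf_mem_finset (hA i G hG).1)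
        refine ⟨k, _, fun i => hC i, ?_, ?_, rfl⟩
        · intro i j hij a ha b hb
          exact hlt i j hij a (hMsFs i a ha) b (hMsFs j b hb)
        · intro i a ha
          exact hk i a (hMsFs i a ha)
      · intro a
        rw [Finset.mem_biUnion]
        constructor
        · rintro ⟨i, -, hi⟩
          obtain ⟨G, hG, haG⟩ := (hD i a).mp hi
          exact ⟨G, List.mem_flatMap.mpr ⟨i, List.mem_finRange i, hG⟩, haG⟩
        · rintro ⟨G, hGL, haG⟩
          obtain ⟨i, -, hG⟩ := List.mem_flatMap.mp hGL
          exact ⟨i, Finset.mem_univ i, (hD i a).mpr ⟨G, hG, haG⟩⟩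

end Dec
section NormSup
open Finset

/-- The second sup set in the implicit equation. -/
def Bset (ψ : ℕ → ℝ) (nrm : C00 → ℝ) (x : C00) : Set ℝ :=
  {r : ℝ | ∃ (q m : ℕ) (E : Fin m → Finset ℕ), 1 ≤ q ∧
    AdmissibleSets (SchreierFam q) E ∧ r = ψ q * ∑ i, nrm (restr (E i) x)}

lemma zero_mem_Bset (ψ : ℕ → ℝ) (nrm : C00 → ℝ) (x : C00) : (0 : ℝ) ∈ Bset ψ nrm x := by
  refine ⟨1, 0, fun i => i.elim0, le_refl 1, ⟨fun i => i.elim0, fun i => i.elim0, ?_⟩, by simp⟩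
  have : (Finset.univ : Finset (Fin 0)).image
      (fun i => sInf (((fun i : Fin 0 => i.elim0 : Fin 0 → Finset ℕ) i : Set ℕ))) = ∅ := by
    simp
  rw [this]
  exact empty_mem_schreier 1

lemma sum_restr_le {f : C00 → ℝ} (hf : IsNorm f) {M : ℕ} (E : Fin M → Finset ℕ)
    (hord : ∀ i j : Fin M, i < j → FinLt (E i) (E j)) (x : C00) :
    ∑ i, f (restr (E i) x) ≤ ∑ F ∈ x.support.powerset, f (restr F x) := by
  classical
  set A : Finset (Fin M) := Finset.univ.filter (fun i => restr (E i) x ≠ 0) with hA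
  have h1 : ∑ i, f (restr (E i) x) = ∑ i ∈ A, f (restr (E i) x) := by
    refine (Finset.sum_subset (Finset.subset_univ A) ?_).symm
    intro i _ hi
    rw [hA, Finset.mem_filter] at hi
    push_neg at hi
    rw [hi (Finset.mem_univ i), hf.zero']
  rw [h1]
  have h2 : ∀ i ∈ A, f (restr (E i) x) = f (restr (E i ∩ x.support) x) := by
    intro i _; rw [restr_inter_support]
  rw [Finset.sum_congr rfl h2]
  have hinj : Set.InjOn (fun i => E i ∩ x.support) A := by
    intro i hi j hj hij
    by_contra hne
    have hd := finlt_disjoint_of_ne hord hne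
    have hi' : restr (E i) x ≠ 0 := by
      have := Finset.mem_coe.mp hi; rw [hA, Finset.mem_filter] at this; exact this.2
    have hne' : (E i ∩ x.support).Nonempty := by
      obtain ⟨a, ha⟩ := (restr_ne_zero_iff (E i) x).mp hi'
      rw [Finset.mem_filter] at ha
      exact ⟨a, Finset.mem_inter.mpr ⟨ha.2, ha.1⟩⟩
    obtain ⟨a, ha⟩ := hne'
    have hij' : E i ∩ x.support = E j ∩ x.support := hij
    have ha2 : a ∈ E j ∩ x.support := by rw [← hij']; exact ha
    exact (Finset.disjoint_left.mp hd (Finset.mem_inter.mp ha).1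
      (Finset.mem_inter.mp ha2).1)
  have h3 : ∑ i ∈ A, f (restr (E i ∩ x.support) x) =
      ∑ F ∈ A.image (fun i => E i ∩ x.support), f (restr F x) :=
    (Finset.sum_image (f := fun F => f (restr F x)) (g := fun i => E i ∩ x.support) (fun i hi j hj h =>
      hinj (Finset.mem_coe.mpr hi) (Finset.mem_coe.mpr hj) h)).symm
  rw [h3]
  refine Finset.sum_le_sum_of_subset_of_nonneg ?_ ?_
  · intro F hF
    rw [Finset.mem_image] at hF
    obtain ⟨i, _, rfl⟩ := hF
    exact Finset.mem_powerset.mpr (Finset.inter_subset_right)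
  · intro F _ _
    exact hf.nonneg' _

lemma bddAbove_Bset {ψ : ℕ → ℝ} {f : C00 → ℝ} (hf : IsNorm f)
    (hψ : ∀ q, 1 ≤ q → 0 ≤ ψ q ∧ ψ q ≤ 1) (x : C00) :
    BddAbove (Bset ψ f x) := by
  refine ⟨∑ F ∈ x.support.powerset, f (restr F x), ?_⟩
  rintro r ⟨q, m, E, hq, ⟨hne, hord, _⟩, rfl⟩
  have hsum : ∑ i, f (restr (E i) x) ≤ ∑ F ∈ x.support.powerset, f (restr F x) :=
    sum_restr_le hf E hord x
  have hsnn : 0 ≤ ∑ i, f (restr (E i) x) :=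
    Finset.sum_nonneg (fun i _ => hf.nonneg' _)
  calc ψ q * ∑ i, f (restr (E i) x) ≤ 1 * ∑ i, f (restr (E i) x) :=
        mul_le_mul_of_nonneg_right (hψ q hq).2 hsnn
    _ = ∑ i, f (restr (E i) x) := one_mul _
    _ ≤ _ := hsum

lemma eq_max_of_mixed {ψ : ℕ → ℝ} {f : C00 → ℝ}
    (heq : MixedTsirelsonNormGen ψ SchreierFam f) (x : C00) :
    f x = max (sSup {r : ℝ | ∃ j : ℕ, r = |x j|}) (sSup (Bset ψ f x)) := heq x

lemma Pf_of_eq {ψ : ℕ → ℝ} {f : C00 → ℝ} (hf : IsNorm f)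
    (hψ : ∀ q, 1 ≤ q → 0 ≤ ψ q ∧ ψ q ≤ 1)
    (heq : MixedTsirelsonNormGen ψ SchreierFam f) :
    ∀ q, 1 ≤ q → ∀ (M : ℕ) (E : Fin M → Finset ℕ),
      AdmissibleSets (SchreierFam q) E → ∀ x : C00,
      ψ q * ∑ i, f (restr (E i) x) ≤ f x := by
  intro q hq M E hE x
  have hmem : ψ q * ∑ i, f (restr (E i) x) ∈ Bset ψ f x := ⟨q, M, E, hq, hE, rfl⟩
  have h1 : ψ q * ∑ i, f (restr (E i) x) ≤ sSup (Bset ψ f x) :=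
    le_csSup (bddAbove_Bset hf hψ x) hmem
  rw [eq_max_of_mixed heq x]
  exact le_trans h1 (le_max_right _ _)

lemma card_nonzero_le {M : ℕ} (E : Fin M → Finset ℕ)
    (hord : ∀ i j : Fin M, i < j → FinLt (E i) (E j)) (x : C00) :
    (Finset.univ.filter (fun i => restr (E i) x ≠ 0)).card ≤ x.support.card := by
  classical
  refine Finset.card_le_card_of_injOn
    (fun i => sInf ((x.support.filter (· ∈ E i)) : Set ℕ)) ?_ ?_
  · intro i hi
    rw [Finset.mem_coe, Finset.mem_filter] at hi
    have hne := (restr_ne_zero_iff (E i) x).mp hi.2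
    have := sInf_mem_finset hne
    exact (Finset.mem_filter.mp this).1
  · intro i hi j hj hij
    by_contra hne
    have hi2 : restr (E i) x ≠ 0 := by
      have := Finset.mem_coe.mp hi; rw [Finset.mem_filter] at this; exact this.2
    have hj2 : restr (E j) x ≠ 0 := by
      have := Finset.mem_coe.mp hj; rw [Finset.mem_filter] at this; exact this.2
    have hd := finlt_disjoint_of_ne hord hne
    have hmi := sInf_mem_finset ((restr_ne_zero_iff (E i) x).mp hi2)
    have hmj := sInf_mem_finset ((restr_ne_zero_iff (E j) x).mp hj2)
    rw [Finset.mem_filter] at hmi hmj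
    have hij' : sInf ((x.support.filter (· ∈ E i)) : Set ℕ) =
        sInf ((x.support.filter (· ∈ E j)) : Set ℕ) := hij
    rw [hij'] at hmi
    exact Finset.disjoint_left.mp hd hmi.2 hmj.2

lemma strictMono_sInf {M : ℕ} (E : Fin M → Finset ℕ) (hne : ∀ i, (E i).Nonempty)
    (hord : ∀ i j : Fin M, i < j → FinLt (E i) (E j)) :
    StrictMono (fun i => sInf ((E i : Set ℕ))) := by
  intro i j hij
  exact hord i j hij _ (sInf_mem_finset (hne i)) _ (sInf_mem_finset (hne j))

end NormSup
section Key
open Finset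

lemma pf_subset {ψ : ℕ → ℝ} {f : C00 → ℝ}
    (Pf : ∀ q, 1 ≤ q → ∀ (M : ℕ) (E : Fin M → Finset ℕ),
      AdmissibleSets (SchreierFam q) E → ∀ x : C00,
      ψ q * ∑ i, f (restr (E i) x) ≤ f x)
    {q : ℕ} (hq : 1 ≤ q) {M : ℕ} (E : Fin M → Finset ℕ)
    (hne : ∀ i, (E i).Nonempty) (hord : ∀ i j : Fin M, i < j → FinLt (E i) (E j))
    (I : Finset (Fin M))
    (hSI : I.image (fun i => sInf ((E i : Set ℕ))) ∈ SchreierFam q) (x : C00) :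
    ψ q * ∑ i ∈ I, f (restr (E i) x) ≤ f x := by
  classical
  set e := I.orderIsoOfFin rfl with he
  set E' : Fin I.card → Finset ℕ := fun t => E (e t) with hE'
  have hadm : AdmissibleSets (SchreierFam q) E' := by
    refine ⟨fun t => hne _, fun t t' htt => hord _ _ ?_, ?_⟩
    · exact Subtype.coe_lt_coe.mpr (e.lt_iff_lt.mpr htt)
    · have himg : (Finset.univ.image fun t => sInf ((E' t : Set ℕ))) =
          I.image (fun i => sInf ((E i : Set ℕ))) := by
        ext r
        simp only [Finset.mem_image, Finset.mem_univ, true_and]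
        constructor
        · rintro ⟨t, rfl⟩; exact ⟨e t, (e t).2, rfl⟩
        · rintro ⟨i, hi, rfl⟩
          exact ⟨e.symm ⟨i, hi⟩, by simp [hE']⟩
      rw [himg]; exact hSI
  have hsum : ∑ t, f (restr (E' t) x) = ∑ i ∈ I, f (restr (E i) x) := by
    have h1 : ∑ t, f (restr (E' t) x) = ∑ i : {y // y ∈ I}, f (restr (E ↑i) x) :=
      Equiv.sum_comp e.toEquiv (fun i => f (restr (E ↑i) x))
    rw [h1, Finset.univ_eq_attach]
    exact Finset.sum_attach I (fun i => f (restr (E i) x))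
  rw [← hsum]
  exact Pf q hq I.card E' hadm x

lemma key_estimate {θ : ℕ → ℝ} {f : C00 → ℝ} (hf : IsNorm f)
    (hθ : ∀ k, 1 ≤ k → 0 ≤ θ k)
    (Pf : ∀ q, 1 ≤ q → ∀ (M : ℕ) (E : Fin M → Finset ℕ),
      AdmissibleSets (SchreierFam q) E → ∀ x : C00,
      θ q * ∑ i, f (restr (E i) x) ≤ f x) :
    ∀ l : List ℕ, l ≠ [] → (∀ k ∈ l, 1 ≤ k) →
    ∀ (M : ℕ) (E : Fin M → Finset ℕ), (∀ i, (E i).Nonempty) →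
      (∀ i j : Fin M, i < j → FinLt (E i) (E j)) →
    ∀ I : Finset (Fin M),
      (I.image fun i => sInf ((E i : Set ℕ))) ∈ SchreierFam l.sum →
    ∀ x : C00, (l.map θ).prod * ∑ i ∈ I, f (restr (E i) x) ≤ f x := by
  intro l
  induction l with
  | nil => intro h; exact absurd rfl h
  | cons k l ih =>
      intro _ hmem M E hne hord I hSI x
      have hk1 : 1 ≤ k := hmem k (List.mem_cons_self)
      by_cases hl : l = []
      · subst hl
        simp only [List.map_cons, List.map_nil, List.prod_cons, List.prod_nil, mul_one]
        have hs : (k :: ([] : List ℕ)).sum = k := by simp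
        rw [hs] at hSI
        exact pf_subset Pf hk1 E hne hord I hSI x
      · set p : Fin M → ℕ := fun i => sInf ((E i : Set ℕ)) with hp
        have hmem' : ∀ a ∈ l, 1 ≤ a := fun a ha => hmem a (List.mem_cons_of_mem k ha)
        rcases I.eq_empty_or_nonempty with rfl | hIne
        · simpa using hf.nonneg' x
        obtain ⟨L, hLmem, hLpair, hLmins, hLcover⟩ :=
          schreier_dec l.sum k (I.image p) (by rw [List.sum_cons] at hSI; exact hSI)
        set len := L.length with hlen
        have hLget : ∀ t : Fin len, L.get t ∈ L := fun t => L.get_mem t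
        set Iblk : Fin len → Finset (Fin M) :=
          fun t => I.filter (fun i => p i ∈ L.get t) with hIblk
        have hpairget : ∀ t t' : Fin len, t < t' → FinLt (L.get t) (L.get t') := by
          rw [List.pairwise_iff_get] at hLpair; exact hLpair
        have hcover : ∀ i ∈ I, ∃ t : Fin len, p i ∈ L.get t := by
          intro i hi
          have hmemI : p i ∈ I.image p := Finset.mem_image_of_mem p hi
          obtain ⟨G, hG, hpG⟩ := (hLcover (p i)).mp hmemI
          obtain ⟨t, ht⟩ := List.mem_iff_get.mp hG
          exact ⟨t, ht ▸ hpG⟩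
        have hIeq : I = (Finset.univ : Finset (Fin len)).biUnion Iblk := by
          ext i
          simp only [Finset.mem_biUnion, Finset.mem_univ, true_and, hIblk,
            Finset.mem_filter]
          constructor
          · intro hi; obtain ⟨t, ht⟩ := hcover i hi; exact ⟨t, hi, ht⟩
          · rintro ⟨t, hi, -⟩; exact hi
        have hdisj : ((Finset.univ : Finset (Fin len)) : Set (Fin len)).PairwiseDisjoint
            Iblk := by
          intro t _ t' _ hne'
          simp only [Function.onFun]
          rw [Finset.disjoint_left]
          intro i h1 h2
          rw [hIblk, Finset.mem_filter] at h1 h2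
          refine hne' ?_
          by_contra hne''
          rcases lt_or_gt_of_ne hne'' with h | h
          · exact lt_irrefl (p i) (hpairget _ _ h _ h1.2 _ h2.2)
          · exact lt_irrefl (p i) (hpairget _ _ h _ h2.2 _ h1.2)
        have hsplit : ∑ i ∈ I, f (restr (E i) x) =
            ∑ t : Fin len, ∑ i ∈ Iblk t, f (restr (E i) x) := by
          conv_lhs => rw [hIeq]
          exact Finset.sum_biUnion hdisj
        have himg : ∀ t : Fin len, (Iblk t).image p = L.get t := by
          intro t; ext r
          simp only [Finset.mem_image, hIblk, Finset.mem_filter]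
          constructor
          · rintro ⟨i, ⟨hiI, hip⟩, rfl⟩; exact hip
          · intro hr
            have hrF : r ∈ I.image p := (hLcover r).mpr ⟨L.get t, hLget t, hr⟩
            obtain ⟨i, hiI, rfl⟩ := Finset.mem_image.mp hrF
            exact ⟨i, ⟨hiI, hr⟩, rfl⟩
        have hblkne : ∀ t, (Iblk t).Nonempty := by
          intro t
          have hGne := (hLmem (L.get t) (hLget t)).1
          rw [← himg t] at hGne
          exact Finset.image_nonempty.mp hGne
        set H : Fin len → Finset ℕ := fun t => (Iblk t).biUnion E with hH
        have hHne : ∀ t, (H t).Nonempty := by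
          intro t
          obtain ⟨i, hi⟩ := hblkne t
          obtain ⟨a, ha⟩ := hne i
          exact ⟨a, Finset.mem_biUnion.mpr ⟨i, hi, ha⟩⟩
        have hpmono : StrictMono p := strictMono_sInf E hne hord
        have hidx : ∀ t t' : Fin len, t < t' →
            ∀ i ∈ Iblk t, ∀ i' ∈ Iblk t', i < i' := by
          intro t t' htt i hi i' hi'
          rw [hIblk, Finset.mem_filter] at hi hi'
          have hpp : p i < p i' := hpairget t t' htt _ hi.2 _ hi'.2
          by_contra hle
          push_neg at hle
          exact absurd hpp (not_lt.mpr (hpmono.monotone hle))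
        have hHord : ∀ t t' : Fin len, t < t' → FinLt (H t) (H t') := by
          intro t t' htt a ha b hb
          obtain ⟨i, hi, hai⟩ := Finset.mem_biUnion.mp ha
          obtain ⟨i', hi', hbi⟩ := Finset.mem_biUnion.mp hb
          exact hord i i' (hidx t t' htt i hi i' hi') a hai b hbi
        have hHinf : ∀ t, sInf ((H t : Set ℕ)) = sInf ((L.get t : Set ℕ)) := by
          intro t
          have hGne := (hLmem (L.get t) (hLget t)).1
          have h1 : sInf ((L.get t : Set ℕ)) ∈ (Iblk t).image p := by
            rw [himg t]; exact sInf_mem_finset hGne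
          obtain ⟨i0, hi0, hp0⟩ := Finset.mem_image.mp h1
          apply le_antisymm
          · rw [← hp0]
            have hmem0 : p i0 ∈ H t :=
              Finset.mem_biUnion.mpr ⟨i0, hi0, sInf_mem_finset (hne i0)⟩
            exact Nat.sInf_le (by exact_mod_cast hmem0)
          · refine le_csInf (Finset.coe_nonempty.mpr (hHne t)) ?_
            intro a ha
            have ha' : a ∈ H t := by exact_mod_cast ha
            obtain ⟨i, hi, hai⟩ := Finset.mem_biUnion.mp ha'
            have h2 : p i ≤ a := Nat.sInf_le (by exact_mod_cast hai)
            have h3 : sInf ((L.get t : Set ℕ)) ≤ p i := by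
              apply Nat.sInf_le
              have hmemi : p i ∈ (Iblk t).image p := Finset.mem_image_of_mem p hi
              rw [himg t] at hmemi
              exact_mod_cast hmemi
            omega
        have hHadm : AdmissibleSets (SchreierFam k) H := by
          refine ⟨hHne, hHord, ?_⟩
          have himg2 : (Finset.univ.image fun t => sInf ((H t : Set ℕ))) =
              (L.map fun G : Finset ℕ => sInf ((G : Set ℕ))).toFinset := by
            ext r
            simp only [Finset.mem_image, Finset.mem_univ, true_and,
              List.mem_toFinset, List.mem_map]
            constructor
            · rintro ⟨t, rfl⟩; exact ⟨L.get t, hLget t, (hHinf t).symm⟩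
            · rintro ⟨G, hG, rfl⟩
              obtain ⟨t, rfl⟩ := List.mem_iff_get.mp hG
              exact ⟨t, hHinf t⟩
          rw [himg2]; exact hLmins
        have hinner : ∀ t : Fin len,
            (l.map θ).prod * ∑ i ∈ Iblk t, f (restr (E i) x) ≤ f (restr (H t) x) := by
          intro t
          have hIH := ih hl hmem' M E hne hord (Iblk t)
            (by rw [himg t]; exact (hLmem _ (hLget t)).2) (restr (H t) x)
          have hre : ∀ i ∈ Iblk t, f (restr (E i) (restr (H t) x)) = f (restr (E i) x) := by
            intro i hi
            rw [restr_restr]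
            congr 1
            rw [Finset.inter_eq_left.mpr (Finset.subset_biUnion_of_mem E hi)]
          rw [Finset.sum_congr rfl hre] at hIH
          exact hIH
        have hfin : (θ k * (l.map θ).prod) * ∑ i ∈ I, f (restr (E i) x) ≤ f x := by
          rw [hsplit, mul_assoc, Finset.mul_sum]
          calc θ k * ∑ t : Fin len, (l.map θ).prod * ∑ i ∈ Iblk t, f (restr (E i) x)
              ≤ θ k * ∑ t : Fin len, f (restr (H t) x) :=
                mul_le_mul_of_nonneg_left
                  (Finset.sum_le_sum (fun t _ => hinner t)) (hθ k hk1)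
            _ ≤ f x := Pf k hk1 len H hHadm x
        simpa [List.map_cons, List.prod_cons] using hfin

end Key
section Main
open Finset

lemma main_le {b : ℝ} (hb0 : 0 ≤ b) (hb1 : b < 1) {f g : C00 → ℝ}
    (hf : IsNorm f) (hg : IsNorm g) {ψ : ℕ → ℝ}
    (hψ : ∀ q, 1 ≤ q → 0 ≤ ψ q ∧ ψ q ≤ b)
    (hgeq : MixedTsirelsonNormGen ψ SchreierFam g)
    (hfa : ∀ x : C00, sSup {r : ℝ | ∃ j : ℕ, r = |x j|} ≤ f x)
    (TR : ∀ q, 1 ≤ q → ∀ (M : ℕ) (E : Fin M → Finset ℕ),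
      AdmissibleSets (SchreierFam q) E → ∀ x : C00,
      ψ q * ∑ i, f (restr (E i) x) ≤ f x) :
    ∀ x : C00, g x ≤ f x := by
  have hψ1 : ∀ q, 1 ≤ q → 0 ≤ ψ q ∧ ψ q ≤ 1 :=
    fun q hq => ⟨(hψ q hq).1, le_trans (hψ q hq).2 (le_of_lt hb1)⟩
  have hmain : ∀ n : ℕ, ∀ x : C00, x.support.card ≤ n →
      ∀ ε : ℝ, 0 < ε → g x ≤ f x + ε := by
    intro n
    induction n using Nat.strong_induction_on with
    | _ n IH =>
      intro x hcard ε hε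
      by_cases hx0 : x = 0
      · subst hx0
        rw [hg.zero', hf.zero']
        linarith
      set a := sSup {r : ℝ | ∃ j : ℕ, r = |x j|} with ha
      set s := sSup (Bset ψ g x) with hs
      have hgx : g x = max a s := hgeq x
      rcases le_or_gt s a with hsa | has
      · rw [hgx, max_eq_left hsa]
        have := hfa x
        linarith
      · have hgx2 : g x = s := by rw [hgx, max_eq_right (le_of_lt has)]
        have h1b : (0:ℝ) < 1 - b := by linarith
        set δ := ε * (1 - b) / 2 with hδ
        have hδpos : 0 < δ := by positivity
        have hlt : g x - δ < s := by rw [hgx2]; linarith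
        obtain ⟨r, hrB, hr⟩ := exists_lt_of_lt_csSup ⟨0, zero_mem_Bset ψ g x⟩ hlt
        obtain ⟨q, m, E, hq1, hadm, rfl⟩ := hrB
        obtain ⟨hEne, hEord, hES⟩ := hadm
        by_cases hfull : ∃ i : Fin m, x.support ⊆ E i
        · obtain ⟨i0, hi0⟩ := hfull
          have hone : ∀ i : Fin m, i ≠ i0 → g (restr (E i) x) = 0 := by
            intro i hi
            have hz : restr (E i) x = 0 := by
              apply restr_eq_zero
              intro c hc hcs
              exact Finset.disjoint_left.mp (finlt_disjoint_of_ne hEord hi) hc (hi0 hcs)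
            rw [hz, hg.zero']
          have hsum : ∑ i, g (restr (E i) x) = g x := by
            rw [Finset.sum_eq_single i0 (fun i _ hi => hone i hi)
              (fun h => absurd (Finset.mem_univ i0) h)]
            rw [restr_eq_self hi0]
          rw [hsum] at hr
          have h1 : ψ q * g x ≤ b * g x :=
            mul_le_mul_of_nonneg_right (hψ q hq1).2 (hg.nonneg' x)
          have h2 : g x * (1 - b) < δ := by nlinarith
          have h3 : g x < ε / 2 := by
            rw [hδ] at h2
            nlinarith
          have := hf.nonneg' x
          linarith
        · push_neg at hfull
          set ε' := ε / (2 * ((n : ℝ) + 1)) with hε'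
          have hε'pos : 0 < ε' := by positivity
          have hpieces : ∀ i : Fin m, g (restr (E i) x) ≤ f (restr (E i) x) +
              (if restr (E i) x = 0 then 0 else ε') := by
            intro i
            by_cases h0 : restr (E i) x = 0
            · rw [h0, hg.zero', hf.zero']; simp [h0]
            · simp only [h0, if_false]
              have hlt2 : (restr (E i) x).support.card < x.support.card := by
                apply Finset.card_lt_card
                rw [support_restr]
                refine (Finset.ssubset_iff_of_subset (Finset.filter_subset _ _)).mpr ?_
                obtain ⟨c, hc1, hc2⟩ := Finset.not_subset.mp (hfull i)
                exact ⟨c, hc1, fun hcf => hc2 (Finset.mem_filter.mp hcf).2⟩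
              have hle : (restr (E i) x).support.card < n := lt_of_lt_of_le hlt2 hcard
              exact IH _ hle (restr (E i) x) le_rfl ε' hε'pos
          set cnt := (Finset.univ.filter (fun i : Fin m => restr (E i) x ≠ 0)).card with hcnt
          have hsum2 : ∑ i, g (restr (E i) x) ≤
              ∑ i, f (restr (E i) x) + (cnt : ℝ) * ε' := by
            calc ∑ i, g (restr (E i) x)
                ≤ ∑ i, (f (restr (E i) x) + if restr (E i) x = 0 then 0 else ε') :=
                  Finset.sum_le_sum (fun i _ => hpieces i)
              _ = ∑ i, f (restr (E i) x) +
                  ∑ i, (if restr (E i) x = 0 then (0:ℝ) else ε') :=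
                  Finset.sum_add_distrib
              _ = ∑ i, f (restr (E i) x) + (cnt : ℝ) * ε' := by
                  congr 1
                  rw [Finset.sum_ite, Finset.sum_const_zero, zero_add,
                    Finset.sum_const, nsmul_eq_mul]
          have hcount : (cnt : ℝ) ≤ (n : ℝ) := by
            exact_mod_cast le_trans (card_nonzero_le E hEord x) hcard
          have hTR := TR q hq1 m E ⟨hEne, hEord, hES⟩ x
          have hfnn : 0 ≤ ∑ i, f (restr (E i) x) :=
            Finset.sum_nonneg (fun i _ => hf.nonneg' _)
          have hq0 := (hψ q hq1).1
          have hq2 := (hψ1 q hq1).2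
          have h4 : ψ q * ∑ i, g (restr (E i) x) ≤ f x + (n : ℝ) * ε' := by
            have hA : ψ q * ∑ i, g (restr (E i) x) ≤
                ψ q * (∑ i, f (restr (E i) x) + (cnt : ℝ) * ε') :=
              mul_le_mul_of_nonneg_left hsum2 hq0
            have hB : ψ q * ((cnt : ℝ) * ε') ≤ (n : ℝ) * ε' := by
              have hcnn : (0:ℝ) ≤ (cnt : ℝ) * ε' := mul_nonneg (Nat.cast_nonneg _) hε'pos.le
              nlinarith
            nlinarith [hTR]
          have h5 : (n : ℝ) * ε' ≤ ε / 2 := by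
            rw [hε']
            rw [mul_div_assoc']
            rw [div_le_div_iff₀ (by positivity) (by norm_num)]
            nlinarith [hε.le]
          have hδε : δ ≤ ε / 2 := by rw [hδ]; nlinarith
          linarith
  intro x
  refine le_of_forall_pos_le_add ?_
  intro ε hε
  exact hmain x.support.card x le_rfl ε hε

end Main
section Reg

/-- The set defining the regularization. -/
def Tset (θ : ℕ → ℝ) (n : ℕ) : Set ℝ :=
  {r : ℝ | ∃ l : List ℕ, l ≠ [] ∧ (∀ k ∈ l, 1 ≤ k) ∧ n ≤ l.sum ∧ r = (l.map θ).prod}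

variable {θ : ℕ → ℝ} {b : ℝ}

lemma lprod_pos_le_one (hpos : ∀ n, 1 ≤ n → 0 < θ n ∧ θ n < 1) :
    ∀ l : List ℕ, (∀ k ∈ l, 1 ≤ k) → 0 < (l.map θ).prod ∧ (l.map θ).prod ≤ 1 := by
  intro l
  induction l with
  | nil => intro _; simp
  | cons k t ih =>
      intro h
      have hk := hpos k (h k (List.mem_cons_self))
      have ht := ih (fun a ha => h a (List.mem_cons_of_mem k ha))
      simp only [List.map_cons, List.prod_cons]
      constructor
      · exact mul_pos hk.1 ht.1
      · nlinarith [hk.1.le, hk.2.le, ht.1.le, ht.2]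

lemma lprod_le_b (hpos : ∀ n, 1 ≤ n → 0 < θ n ∧ θ n < 1)
    (hble : ∀ n, 1 ≤ n → θ n ≤ b) :
    ∀ l : List ℕ, l ≠ [] → (∀ k ∈ l, 1 ≤ k) → (l.map θ).prod ≤ b := by
  intro l hl h
  cases l with
  | nil => exact absurd rfl hl
  | cons k t =>
      have hk1 : 1 ≤ k := h k (List.mem_cons_self)
      have ht := lprod_pos_le_one hpos t (fun a ha => h a (List.mem_cons_of_mem k ha))
      have hkb := hble k hk1
      have hk := hpos k hk1
      simp only [List.map_cons, List.prod_cons]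
      nlinarith [ht.1.le, ht.2]

lemma lprod_le_of_mem (hpos : ∀ n, 1 ≤ n → 0 < θ n ∧ θ n < 1) :
    ∀ l : List ℕ, (∀ k ∈ l, 1 ≤ k) → ∀ k0 ∈ l, (l.map θ).prod ≤ θ k0 := by
  intro l
  induction l with
  | nil => intro _ k0 h; exact absurd h List.not_mem_nil
  | cons k t ih =>
      intro h k0 hk0
      have hk := hpos k (h k (List.mem_cons_self))
      have ht := lprod_pos_le_one hpos t (fun a ha => h a (List.mem_cons_of_mem k ha))
      simp only [List.map_cons, List.prod_cons]
      rcases List.mem_cons.mp hk0 with rfl | hk0t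
      · nlinarith [ht.1.le, ht.2]
      · have h2 := ih (fun a ha => h a (List.mem_cons_of_mem k ha)) k0 hk0t
        have hθ0 := (hpos k0 (h k0 (List.mem_cons_of_mem k hk0t))).1
        nlinarith [ht.1.le]

lemma lprod_le_pow (hpos : ∀ n, 1 ≤ n → 0 < θ n ∧ θ n < 1)
    (hble : ∀ n, 1 ≤ n → θ n ≤ b) (hb0 : 0 ≤ b) :
    ∀ l : List ℕ, (∀ k ∈ l, 1 ≤ k) → (l.map θ).prod ≤ b ^ l.length := by
  intro l
  induction l with
  | nil => intro _; simp
  | cons k t ih =>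
      intro h
      have hk1 : 1 ≤ k := h k (List.mem_cons_self)
      have hk := hpos k hk1
      have ht := ih (fun a ha => h a (List.mem_cons_of_mem k ha))
      have htp := lprod_pos_le_one hpos t (fun a ha => h a (List.mem_cons_of_mem k ha))
      simp only [List.map_cons, List.prod_cons, List.length_cons, pow_succ]
      have hkb := hble k hk1
      have hbl : (0:ℝ) ≤ b ^ t.length := pow_nonneg hb0 _
      calc θ k * (t.map θ).prod ≤ b * (t.map θ).prod := by nlinarith [htp.1.le]
        _ ≤ b * b ^ t.length := by nlinarith [htp.1.le]
        _ = b ^ t.length * b := mul_comm _ _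

lemma Tset_nonempty (n : ℕ) : (Tset θ n).Nonempty := by
  refine ⟨((([max n 1] : List ℕ)).map θ).prod, [max n 1], by simp, ?_, ?_, rfl⟩
  · intro k hk
    simp only [List.mem_singleton] at hk
    subst hk; exact le_max_right n 1
  · simp

lemma Tset_bddAbove (hpos : ∀ n, 1 ≤ n → 0 < θ n ∧ θ n < 1)
    (hble : ∀ n, 1 ≤ n → θ n ≤ b) (n : ℕ) : BddAbove (Tset θ n) := by
  refine ⟨b, ?_⟩
  rintro r ⟨l, hlne, hl1, _, rfl⟩
  exact lprod_le_b hpos hble l hlne hl1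

lemma tb_le_b (hpos : ∀ n, 1 ≤ n → 0 < θ n ∧ θ n < 1)
    (hble : ∀ n, 1 ≤ n → θ n ≤ b) (n : ℕ) : sSup (Tset θ n) ≤ b :=
  csSup_le (Tset_nonempty n) (fun r ⟨l, hlne, hl1, _, hr⟩ =>
    hr ▸ lprod_le_b hpos hble l hlne hl1)

lemma theta_le_tb (hpos : ∀ n, 1 ≤ n → 0 < θ n ∧ θ n < 1)
    (hble : ∀ n, 1 ≤ n → θ n ≤ b) {q : ℕ} (hq : 1 ≤ q) :
    θ q ≤ sSup (Tset θ q) := by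
  apply le_csSup (Tset_bddAbove hpos hble q)
  exact ⟨[q], by simp, by simpa using hq, by simp, by simp⟩

lemma tb_pos (hpos : ∀ n, 1 ≤ n → 0 < θ n ∧ θ n < 1)
    (hble : ∀ n, 1 ≤ n → θ n ≤ b) (n : ℕ) : 0 < sSup (Tset θ n) := by
  have h1 : θ (max n 1) ≤ sSup (Tset θ n) := by
    apply le_csSup (Tset_bddAbove hpos hble n)
    refine ⟨[max n 1], by simp, ?_, by simp, by simp⟩
    intro k hk
    simp only [List.mem_singleton] at hk
    subst hk; exact le_max_right n 1
  exact lt_of_lt_of_le (hpos _ (le_max_right n 1)).1 h1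

lemma tb_antitone (hpos : ∀ n, 1 ≤ n → 0 < θ n ∧ θ n < 1)
    (hble : ∀ n, 1 ≤ n → θ n ≤ b) (n : ℕ) :
    sSup (Tset θ (n + 1)) ≤ sSup (Tset θ n) := by
  apply csSup_le_csSup (Tset_bddAbove hpos hble n) (Tset_nonempty (n+1))
  rintro r ⟨l, hlne, hl1, hls, rfl⟩
  exact ⟨l, hlne, hl1, by omega, rfl⟩

lemma tb_submult (hpos : ∀ n, 1 ≤ n → 0 < θ n ∧ θ n < 1)
    (hble : ∀ n, 1 ≤ n → θ n ≤ b) (n m : ℕ) :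
    sSup (Tset θ n) * sSup (Tset θ m) ≤ sSup (Tset θ (n + m)) := by
  have hA : 0 < sSup (Tset θ m) := tb_pos hpos hble m
  have key : ∀ r ∈ Tset θ n, r * sSup (Tset θ m) ≤ sSup (Tset θ (n + m)) := by
    rintro r ⟨l, hlne, hl1, hls, rfl⟩
    have hr0 : 0 < (l.map θ).prod := (lprod_pos_le_one hpos l hl1).1
    rw [mul_comm, ← le_div_iff₀ hr0]
    apply csSup_le (Tset_nonempty m)
    rintro r' ⟨l', hlne', hl1', hls', rfl⟩
    rw [le_div_iff₀ hr0]
    apply le_csSup (Tset_bddAbove hpos hble (n + m))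
    refine ⟨l' ++ l, by simp [hlne'], ?_, ?_, ?_⟩
    · intro k hk
      rcases List.mem_append.mp hk with h | h
      · exact hl1' k h
      · exact hl1 k h
    · rw [List.sum_append]; omega
    · rw [List.map_append, List.prod_append]
  rw [← le_div_iff₀ hA]
  apply csSup_le (Tset_nonempty n)
  intro r hr
  rw [le_div_iff₀ hA]
  exact key r hr

lemma tb_tendsto (hpos : ∀ n, 1 ≤ n → 0 < θ n ∧ θ n < 1)
    (hto0 : Filter.Tendsto θ Filter.atTop (nhds 0))
    (hb1 : b < 1) (hble : ∀ n, 1 ≤ n → θ n ≤ b) :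
    Filter.Tendsto (fun n => sSup (Tset θ n)) Filter.atTop (nhds 0) := by
  have hb0 : 0 < b := lt_of_lt_of_le (hpos 1 le_rfl).1 (hble 1 le_rfl)
  rw [Metric.tendsto_atTop]
  intro ε hε
  obtain ⟨L, hL⟩ := exists_pow_lt_of_lt_one (show (0:ℝ) < ε/2 by positivity) hb1
  obtain ⟨K, hK⟩ := Metric.tendsto_atTop.mp hto0 (ε/2) (by positivity)
  refine ⟨(L + 1) * (K + 1), ?_⟩
  intro n hn
  have hub : ∀ r ∈ Tset θ n, r ≤ ε / 2 := by
    rintro r ⟨l, hlne, hl1, hls, rfl⟩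
    by_cases hlen : L ≤ l.length
    · have h1 : (l.map θ).prod ≤ b ^ l.length := lprod_le_pow hpos hble hb0.le l hl1
      have h2 : b ^ l.length ≤ b ^ L := pow_le_pow_of_le_one hb0.le hb1.le hlen
      linarith
    · push_neg at hlen
      have hex : ∃ k ∈ l, K + 1 ≤ k := by
        by_contra h
        push_neg at h
        have hsum : l.sum ≤ l.length * K := by
          have h2 := List.sum_le_card_nsmul l K (fun x hx => by
            have := h x hx; omega)
          simpa [smul_eq_mul] using h2
        have h3 : l.length * K ≤ L * K := Nat.mul_le_mul_right K (le_of_lt hlen)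
        have h4 : L * K < (L + 1) * (K + 1) := by nlinarith
        omega
      obtain ⟨k0, hk0l, hk0⟩ := hex
      have h1 : (l.map θ).prod ≤ θ k0 := lprod_le_of_mem hpos l hl1 k0 hk0l
      have h2 : θ k0 < ε / 2 := by
        have := hK k0 (by omega)
        rw [Real.dist_eq, sub_zero] at this
        exact lt_of_le_of_lt (le_abs_self _) this
      linarith
  have h1 : sSup (Tset θ n) ≤ ε / 2 := csSup_le (Tset_nonempty n) hub
  have h2 : 0 < sSup (Tset θ n) := tb_pos hpos hble n
  rw [Real.dist_eq, sub_zero, abs_of_nonneg h2.le]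
  linarith

end Reg
/-- The regularization: if `(θ_n) ⊂ (0,1)` with `θ_n → 0` and `sup_n θ_n < 1`, then
`θ̄_n := sup{θ_{k_1}⋯θ_{k_ℓ} : k_1 + ⋯ + k_ℓ ≥ n}` is a regular sequence and
`T(θ_n,S_n)` is naturally isometric to `T(θ̄_n,S_n)`. -/
theorem regularization_isometric
    (θ : ℕ → ℝ) (hpos : ∀ n : ℕ, 1 ≤ n → 0 < θ n ∧ θ n < 1)
    (hto0 : Tendsto θ atTop (nhds 0))
    (b : ℝ) (hb : b < 1) (hble : ∀ n : ℕ, 1 ≤ n → θ n ≤ b) :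
    RegularSeq (fun n : ℕ => sSup {r : ℝ | ∃ l : List ℕ, l ≠ [] ∧ (∀ k ∈ l, 1 ≤ k) ∧
      n ≤ l.sum ∧ r = (l.map θ).prod}) ∧
    ∀ nrm nrm' : C00 → ℝ, IsNorm nrm → IsNorm nrm' →
      MixedTsirelsonNorm θ nrm →
      MixedTsirelsonNorm (fun n : ℕ => sSup {r : ℝ | ∃ l : List ℕ, l ≠ [] ∧
        (∀ k ∈ l, 1 ≤ k) ∧ n ≤ l.sum ∧ r = (l.map θ).prod}) nrm' →
      ∀ x : C00, nrm x = nrm' x := by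
  have hb0 : 0 < b := lt_of_lt_of_le (hpos 1 le_rfl).1 (hble 1 le_rfl)
  constructor
  · refine ⟨?_, ?_, ?_, ?_⟩
    · intro n _
      exact ⟨tb_pos hpos hble n, lt_of_le_of_lt (tb_le_b hpos hble n) hb⟩
    · intro n _
      exact tb_antitone hpos hble n
    · exact tb_tendsto hpos hto0 hb hble
    · intro n m _ _
      exact tb_submult hpos hble n m
  · intro nrm nrm' hn hn' heq heq' x
    have hθb : ∀ q, 1 ≤ q → 0 ≤ θ q ∧ θ q ≤ b :=
      fun q hq => ⟨(hpos q hq).1.le, hble q hq⟩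
    have htbb : ∀ q, 1 ≤ q → 0 ≤ sSup (Tset θ q) ∧ sSup (Tset θ q) ≤ b :=
      fun q hq => ⟨(tb_pos hpos hble q).le, tb_le_b hpos hble q⟩
    have hθ1 : ∀ q, 1 ≤ q → 0 ≤ θ q ∧ θ q ≤ 1 :=
      fun q hq => ⟨(hpos q hq).1.le, le_trans (hble q hq) hb.le⟩
    have htb1 : ∀ q, 1 ≤ q → 0 ≤ sSup (Tset θ q) ∧ sSup (Tset θ q) ≤ 1 :=
      fun q hq => ⟨(tb_pos hpos hble q).le, le_trans (tb_le_b hpos hble q) hb.le⟩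
    have heq2 : MixedTsirelsonNormGen θ SchreierFam nrm := heq
    have heq'2 : MixedTsirelsonNormGen (fun n => sSup (Tset θ n)) SchreierFam nrm' := heq'
    have Pf := Pf_of_eq hn hθ1 heq2
    have Pf' := Pf_of_eq hn' htb1 heq'2
    have hfa : ∀ y : C00, sSup {r : ℝ | ∃ j : ℕ, r = |y j|} ≤ nrm y := by
      intro y; rw [heq2 y]; exact le_max_left _ _
    have hfa' : ∀ y : C00, sSup {r : ℝ | ∃ j : ℕ, r = |y j|} ≤ nrm' y := by
      intro y; rw [heq'2 y]; exact le_max_left _ _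
    have TR1 : ∀ q, 1 ≤ q → ∀ (M : ℕ) (E : Fin M → Finset ℕ),
        AdmissibleSets (SchreierFam q) E → ∀ y : C00,
        sSup (Tset θ q) * ∑ i, nrm (restr (E i) y) ≤ nrm y := by
      intro q hq M E hE y
      obtain ⟨hne, hord, hS⟩ := hE
      have hSnn : 0 ≤ ∑ i, nrm (restr (E i) y) :=
        Finset.sum_nonneg (fun i _ => hn.nonneg' _)
      rcases eq_or_lt_of_le hSnn with heq0 | hpos'
      · rw [← heq0, mul_zero]; exact hn.nonneg' y
      · have hkey : ∀ r ∈ Tset θ q, r ≤ nrm y / ∑ i, nrm (restr (E i) y) := by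
          rintro r ⟨l, hlne, hl1, hlsum, rfl⟩
          rw [le_div_iff₀ hpos']
          have hmono : (Finset.univ.image fun i => sInf ((E i : Set ℕ)))
              ∈ SchreierFam l.sum :=
            schreier_mono hq hlsum hS
          exact key_estimate hn (fun k hk => (hpos k hk).1.le) Pf l hlne hl1 M E
            hne hord Finset.univ hmono y
        have h2 := csSup_le (Tset_nonempty q) hkey
        rw [le_div_iff₀ hpos'] at h2
        exact h2
    have TR2 : ∀ q, 1 ≤ q → ∀ (M : ℕ) (E : Fin M → Finset ℕ),
        AdmissibleSets (SchreierFam q) E → ∀ y : C00,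
        θ q * ∑ i, nrm' (restr (E i) y) ≤ nrm' y := by
      intro q hq M E hE y
      have hSnn : 0 ≤ ∑ i, nrm' (restr (E i) y) :=
        Finset.sum_nonneg (fun i _ => hn'.nonneg' _)
      have h1 : θ q * ∑ i, nrm' (restr (E i) y) ≤
          sSup (Tset θ q) * ∑ i, nrm' (restr (E i) y) :=
        mul_le_mul_of_nonneg_right (theta_le_tb hpos hble hq) hSnn
      exact le_trans h1 (Pf' q hq M E hE y)
    have d1 : nrm' x ≤ nrm x :=
      main_le hb0.le hb hn hn' htbb heq'2 hfa TR1 x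
    have d2 : nrm x ≤ nrm' x :=
      main_le hb0.le hb hn' hn hθb heq2 hfa' TR2 x
    exact le_antisymm d2 d1

end
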